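/- For any d > 0 and any 0 ≤ j < 2^d, the set g_d^{-1}({0, 1, ..., j}) of Gray code preimages of the first j+1 integers is a composite set of the hypercube Q^d. -/

import Mathlib

/-- The binary-reflected Gray code list for `d` bits: the list for `d` bits is obtained
from the list for `d-1` bits by prefixing the original list with `false` and the
reversed list with `true`, then concatenating. -/
def grayList : (d : ℕ) → List (Fin d → Bool)
  | 0 => [fun i => i.elim0]
  | d + 1 => (grayList d).map (Fin.cons false) ++ (grayList d).reverse.map (Fin.cons true)

/-- `grayIdx d w` is the position of the string `w` in the binary-reflected Gray code
list for `d` bits (the Gray code value `g_d(w)`). -/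
def grayIdx (d : ℕ) (w : Fin d → Bool) : ℕ := (grayList d).idxOf w

/-- The hypercube graph `Q^d` on `{0,1}^d`: two strings are adjacent iff they differ
in exactly one coordinate. -/
def Q (d : ℕ) : SimpleGraph (Fin d → Bool) where
  Adj x y := hammingDist x y = 1
  symm := by constructor; intro x y h; rwa [hammingDist_comm]
  loopless := by constructor; intro x h; simp [hammingDist_self] at h

/-- A `c`-subcube of `Q^r`: the set of all vertices having fixed values on some
`r - c` coordinates. -/
def IsSubcube (r c : ℕ) (S : Set (Fin r → Bool)) : Prop :=
  ∃ (F : Finset (Fin r)) (val : Fin r → Bool),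
    F.card = r - c ∧ S = {w | ∀ i ∈ F, w i = val i}

/-- The neighborhood of a vertex set in `Q^r`. -/
def nbhd (r : ℕ) (A : Set (Fin r → Bool)) : Set (Fin r → Bool) :=
  {v | ∃ a ∈ A, (Q r).Adj v a}

/-- A composite (cubal) set in `Q^r`: a disjoint union of subcubes of strictly
increasing dimensions, each smaller subcube lying in the neighborhood of every
larger one. -/
def IsCompositeSet (r : ℕ) (S : Set (Fin r → Bool)) : Prop :=
  ∃ (m : ℕ) (c : Fin m → ℕ) (cube : Fin m → Set (Fin r → Bool)),
    StrictMono c ∧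
    (∀ i, IsSubcube r (c i) (cube i)) ∧
    Pairwise (fun i j => Disjoint (cube i) (cube j)) ∧
    S = ⋃ i, cube i ∧
    (∀ i j, i < j → cube i ⊆ nbhd r (cube j))

lemma indexOf_map_inj {α β : Type*} [DecidableEq α] [DecidableEq β] {f : α → β}
    (hf : Function.Injective f) (l : List α) (a : α) :
    (l.map f).idxOf (f a) = l.idxOf a := by
  induction l with
  | nil => rfl
  | cons b l ih =>
    by_cases h : a = b
    · simp [h, List.idxOf_cons_self]
    · rw [List.map_cons, List.idxOf_cons_ne _ (by exact fun h' => h (hf h').symm),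
        List.idxOf_cons_ne _ (Ne.symm h), ih]

lemma indexOf_reverse {α : Type*} [DecidableEq α] {l : List α} (hl : l.Nodup) {a : α}
    (ha : a ∈ l) : l.reverse.idxOf a = l.length - 1 - l.idxOf a := by
  have h1 : l.idxOf a < l.length := List.idxOf_lt_length_iff.2 ha
  have h2 : l.length - 1 - l.idxOf a < l.reverse.length := by
    rw [List.length_reverse]; omega
  have key : l.reverse[l.length - 1 - l.idxOf a] = a := by
    rw [List.getElem_reverse]
    have h3 : l.length - 1 - (l.length - 1 - l.idxOf a) = l.idxOf a := by
      rw [List.length_reverse] at h2; omega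
    simp only [List.length_reverse, h3]
    exact List.getElem_idxOf h1
  calc l.reverse.idxOf a = l.reverse.idxOf (l.reverse[l.length - 1 - l.idxOf a]) := by
        rw [key]
    _ = l.length - 1 - l.idxOf a := (List.nodup_reverse.2 hl).idxOf_getElem _ h2

lemma grayList_length (d : ℕ) : (grayList d).length = 2 ^ d := by
  induction d with
  | zero => rfl
  | succ d ih => simp [grayList, ih]; ring

lemma mem_grayList (d : ℕ) (w : Fin d → Bool) : w ∈ grayList d := by
  induction d with
  | zero =>
    have : w = fun i => i.elim0 := funext fun i => i.elim0
    simp [grayList, this]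
  | succ d ih =>
    simp only [grayList, List.mem_append, List.mem_map, List.mem_reverse]
    rcases h : w 0 with _ | _
    · exact Or.inl ⟨Fin.tail w, ih _, by rw [← h, Fin.cons_self_tail]⟩
    · exact Or.inr ⟨Fin.tail w, ih _, by rw [← h, Fin.cons_self_tail]⟩

lemma grayList_nodup (d : ℕ) : (grayList d).Nodup := by
  induction d with
  | zero => simp [grayList]
  | succ d ih =>
    refine List.Nodup.append ?_ ?_ ?_
    · exact ih.map (Fin.cons_right_injective _)
    · exact (List.nodup_reverse.2 ih).map (Fin.cons_right_injective _)
    · intro x hx hy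
      simp only [List.mem_map, List.mem_reverse] at hx hy
      obtain ⟨a, -, ha⟩ := hx; obtain ⟨b, -, hb⟩ := hy
      have h1 : (Fin.cons false a : Fin (d+1) → Bool) 0 = (Fin.cons true b : Fin (d+1) → Bool) 0 := by rw [ha, hb]
      simp [Fin.cons_zero] at h1

lemma grayIdx_lt (d : ℕ) (w : Fin d → Bool) : grayIdx d w < 2 ^ d := by
  rw [← grayList_length]
  exact List.idxOf_lt_length_iff.2 (mem_grayList d w)

lemma grayList_succ (d : ℕ) : grayList (d + 1)
    = (grayList d).map (Fin.cons false) ++ (grayList d).reverse.map (Fin.cons true) := rfl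

lemma grayIdx_cons_false (d : ℕ) (w : Fin d → Bool) :
    grayIdx (d + 1) (Fin.cons false w) = grayIdx d w := by
  rw [grayIdx, grayList_succ,
    List.idxOf_append_of_mem (List.mem_map_of_mem (mem_grayList d w)),
    indexOf_map_inj (Fin.cons_right_injective _)]
  rfl

lemma grayIdx_cons_true (d : ℕ) (w : Fin d → Bool) :
    grayIdx (d + 1) (Fin.cons true w) = 2 ^ (d + 1) - 1 - grayIdx d w := by
  have hnot : (Fin.cons true w : Fin (d+1) → Bool) ∉ (grayList d).map (Fin.cons false) := by
    intro h
    obtain ⟨a, -, ha⟩ := List.mem_map.1 h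
    have h1 : (Fin.cons false a : Fin (d+1) → Bool) 0 = (Fin.cons true w : Fin (d+1) → Bool) 0 :=
      by rw [ha]
    simp [Fin.cons_zero] at h1
  have hg := grayIdx_lt d w
  have h2 : (0:ℕ) < 2 ^ d := Nat.pow_pos (n := d) (by norm_num)
  rw [grayIdx, grayList_succ, List.idxOf_append_of_notMem hnot, List.length_map,
    grayList_length, indexOf_map_inj (Fin.cons_right_injective _),
    indexOf_reverse (grayList_nodup d) (mem_grayList d w), grayList_length]
  have : grayIdx d w = (grayList d).idxOf w := rfl
  rw [← this, pow_succ]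
  omega

/-! ### flip of coordinate 0 -/

def flip0 {e : ℕ} (w : Fin (e + 1) → Bool) : Fin (e + 1) → Bool :=
  Fin.cons (!(w 0)) (Fin.tail w)

@[simp] lemma flip0_cons {e : ℕ} (b : Bool) (u : Fin e → Bool) :
    flip0 (Fin.cons b u) = Fin.cons (!b) u := by
  unfold flip0
  rw [Fin.cons_zero, Fin.tail_cons]

@[simp] lemma flip0_flip0 {e : ℕ} (w : Fin (e + 1) → Bool) : flip0 (flip0 w) = w := by
  have := Fin.cons_self_tail w
  conv_lhs => rw [← this]
  rw [flip0_cons, flip0_cons, Bool.not_not, this]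

lemma flip0_injective {e : ℕ} : Function.Injective (flip0 (e := e)) := by
  intro x y h
  rw [← flip0_flip0 x, h, flip0_flip0]

lemma flip0_apply {e : ℕ} (w : Fin (e + 1) → Bool) (i : Fin (e + 1)) :
    flip0 w i = if i = 0 then !(w 0) else w i := by
  induction i using Fin.cases with
  | zero => simp [flip0, Fin.cons_zero]
  | succ j => simp [flip0, Fin.cons_succ, Fin.tail, Fin.succ_ne_zero]

lemma grayIdx_flip0 {e : ℕ} (w : Fin (e + 1) → Bool) :
    grayIdx (e + 1) (flip0 w) = 2 ^ (e + 1) - 1 - grayIdx (e + 1) w := by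
  have hw := Fin.cons_self_tail w
  have hlt := grayIdx_lt e (Fin.tail w)
  have hp : (0:ℕ) < 2 ^ e := Nat.pow_pos (n := e) (by norm_num)
  have hpow : (2:ℕ) ^ (e+1) = 2 * 2 ^ e := by rw [pow_succ]; ring
  rcases hb : w 0 with _ | _ <;>
    rw [← hw, hb, flip0_cons] <;>
    simp only [Bool.not_false, Bool.not_true, grayIdx_cons_true, grayIdx_cons_false] <;>
    omega

lemma hammingDist_cons {d : ℕ} (a b : Bool) (x y : Fin d → Bool) :
    hammingDist (Fin.cons a x : Fin (d+1) → Bool) (Fin.cons b y : Fin (d+1) → Bool)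
      = (if a = b then 0 else 1) + hammingDist x y := by
  simp only [hammingDist, Finset.card_filter, Fin.sum_univ_succ, Fin.cons_zero, Fin.cons_succ]
  by_cases h : a = b <;> simp [h]

lemma hammingDist_flip0 {e : ℕ} (x y : Fin (e + 1) → Bool) :
    hammingDist (flip0 x) (flip0 y) = hammingDist x y := by
  have hx := Fin.cons_self_tail x
  have hy := Fin.cons_self_tail y
  conv_rhs => rw [← hx, ← hy]
  conv_lhs => rw [← hx, ← hy]
  rw [flip0_cons, flip0_cons, hammingDist_cons, hammingDist_cons]
  cases hb : x 0 <;> cases hc : y 0 <;> simp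

/-! ### images of subcubes -/

lemma mem_cons_image {d : ℕ} (b : Bool) (S : Set (Fin d → Bool)) (w : Fin (d + 1) → Bool) :
    w ∈ Fin.cons b '' S ↔ w 0 = b ∧ Fin.tail w ∈ S := by
  constructor
  · rintro ⟨u, hu, rfl⟩
    simp [Fin.cons_zero, Fin.tail_cons, hu]
  · rintro ⟨h0, ht⟩
    exact ⟨Fin.tail w, ht, by rw [← h0, Fin.cons_self_tail]⟩

lemma mem_flip0_image {e : ℕ} {S : Set (Fin (e + 1) → Bool)} {w : Fin (e + 1) → Bool} :
    w ∈ flip0 '' S ↔ flip0 w ∈ S := by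
  constructor
  · rintro ⟨u, hu, rfl⟩; rwa [flip0_flip0]
  · intro h; exact ⟨flip0 w, h, flip0_flip0 w⟩

lemma isSubcube_cons_image {d c : ℕ} (hc : c ≤ d) (b : Bool) {S : Set (Fin d → Bool)}
    (hS : IsSubcube d c S) : IsSubcube (d + 1) c (Fin.cons b '' S) := by
  obtain ⟨F, val, hF, rfl⟩ := hS
  refine ⟨insert 0 (F.image Fin.succ), Fin.cons b val, ?_, ?_⟩
  · rw [Finset.card_insert_of_notMem, Finset.card_image_of_injective _ (Fin.succ_injective d),
      hF]
    · omega
    · simp only [Finset.mem_image, not_exists]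
      intro a h
      exact Fin.succ_ne_zero a h.2
  · ext w
    rw [mem_cons_image]
    simp only [Set.mem_setOf_eq, Finset.mem_insert, Finset.mem_image]
    constructor
    · rintro ⟨h0, ht⟩ i hi
      rcases hi with rfl | ⟨a, ha, rfl⟩
      · simpa [Fin.cons_zero] using h0
      · have := ht a ha
        simpa [Fin.cons_succ, Fin.tail] using this
    · intro h
      refine ⟨by simpa [Fin.cons_zero] using h 0 (Or.inl rfl), fun i hi => ?_⟩
      have := h i.succ (Or.inr ⟨i, hi, rfl⟩)
      simpa [Fin.cons_succ, Fin.tail] using this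

lemma isSubcube_flip0_image {e c : ℕ} {S : Set (Fin (e + 1) → Bool)}
    (hS : IsSubcube (e + 1) c S) : IsSubcube (e + 1) c (flip0 '' S) := by
  obtain ⟨F, val, hF, rfl⟩ := hS
  refine ⟨F, flip0 val, hF, ?_⟩
  ext w
  rw [mem_flip0_image]
  simp only [Set.mem_setOf_eq]
  constructor <;> intro h i hi <;> have hh := h i hi <;>
    rw [flip0_apply] at * <;> by_cases h0 : i = 0 <;>
    simp only [h0, if_true, if_false] at * <;>
    first
      | exact hh
      | (cases hb : w i <;> cases hc : val i <;> simp_all)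

/-! ### neighbourhood lemmas -/

lemma mem_nbhd_image {r s : ℕ} (f : (Fin r → Bool) → (Fin s → Bool))
    (hf : ∀ x y, hammingDist (f x) (f y) = hammingDist x y)
    {A : Set (Fin r → Bool)} {x : Fin r → Bool} (hx : x ∈ nbhd r A) : f x ∈ nbhd s (f '' A) := by
  obtain ⟨a, ha, hadj⟩ := hx
  exact ⟨f a, ⟨a, ha, rfl⟩, show hammingDist (f x) (f a) = 1 by rw [hf]; exact hadj⟩

/-! ### initial segment descriptions -/

lemma two_pow_succ_eq (d : ℕ) : (2:ℕ) ^ (d + 1) = 2 * 2 ^ d := by rw [pow_succ]; ring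

lemma segA {d j : ℕ} (hj : j < 2 ^ d) :
    {w : Fin (d + 1) → Bool | grayIdx (d + 1) w ≤ j}
      = Fin.cons false '' {w | grayIdx d w ≤ j} := by
  ext w
  refine Fin.consCases (fun b u => ?_) w
  rw [Set.mem_setOf_eq, mem_cons_image]
  have h1 := grayIdx_lt d u
  have hpow := two_pow_succ_eq d
  cases b
  · simp [grayIdx_cons_false, Fin.cons_zero, Fin.tail_cons, Set.mem_setOf_eq]
  · rw [grayIdx_cons_true]
    simp only [Fin.cons_zero, Bool.true_eq_false, false_and, iff_false, not_le]
    omega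

lemma segB {d : ℕ} :
    {w : Fin (d + 1) → Bool | grayIdx (d + 1) w ≤ 2 ^ d - 1}
      = {w : Fin (d + 1) → Bool | w 0 = false} := by
  ext w
  refine Fin.consCases (fun b u => ?_) w
  have h1 := grayIdx_lt d u
  have hpow := two_pow_succ_eq d
  cases b
  · simp only [Set.mem_setOf_eq, grayIdx_cons_false, Fin.cons_zero]
    constructor
    · intro _; trivial
    · intro _; omega
  · simp only [Set.mem_setOf_eq, grayIdx_cons_true, Fin.cons_zero, Bool.true_eq_false,
      iff_false, not_le]
    omega

lemma mem_tau_image {e : ℕ} {S : Set (Fin (e + 1) → Bool)} {w : Fin (e + 2) → Bool} :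
    w ∈ (fun u => Fin.cons true (flip0 u) : (Fin (e+1) → Bool) → (Fin (e+2) → Bool)) '' S
      ↔ w 0 = true ∧ flip0 (Fin.tail w) ∈ S := by
  have : (fun u => Fin.cons true (flip0 u) : (Fin (e+1) → Bool) → (Fin (e+2) → Bool))
      = (Fin.cons true) ∘ flip0 := rfl
  rw [this, Set.image_comp, mem_cons_image, mem_flip0_image]

lemma segC {e j : ℕ} (h1 : 2 ^ (e + 1) ≤ j) (h2 : j < 2 ^ (e + 2)) :
    {w : Fin (e + 2) → Bool | grayIdx (e + 2) w ≤ j}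
      = {w : Fin (e + 2) → Bool | w 0 = false}
        ∪ (fun u => Fin.cons true (flip0 u) : (Fin (e+1) → Bool) → (Fin (e+2) → Bool)) ''
            {w | grayIdx (e + 1) w ≤ j - 2 ^ (e + 1)} := by
  ext w
  refine Fin.consCases (fun b u => ?_) w
  rw [Set.mem_setOf_eq, Set.mem_union, mem_tau_image]
  have hg := grayIdx_lt (e + 1) u
  have hgf := grayIdx_flip0 u
  have hpow := two_pow_succ_eq (e + 1)
  cases b
  · simp only [grayIdx_cons_false, Fin.cons_zero, Set.mem_setOf_eq]
    have := grayIdx_lt (e + 1) u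
    constructor
    · intro _; left; trivial
    · intro _; omega
  · simp only [grayIdx_cons_true, Fin.cons_zero, Bool.true_eq_false, false_or,
      Fin.tail_cons, Set.mem_setOf_eq, true_and, grayIdx_flip0]
    omega

/-! ### snoc helpers -/

lemma iUnion_snoc {m : ℕ} {α : Type*} (f : Fin m → Set α) (a : Set α) :
    (⋃ i, (Fin.snoc f a : Fin (m+1) → Set α) i) = (⋃ i, f i) ∪ a := by
  ext x
  simp only [Set.mem_iUnion, Set.mem_union]
  constructor
  · rintro ⟨i, hi⟩
    induction i using Fin.lastCases with
    | last => right; rwa [Fin.snoc_last] at hi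
    | cast i' => left; exact ⟨i', by rwa [Fin.snoc_castSucc] at hi⟩
  · rintro (⟨i, hi⟩ | ha)
    · exact ⟨i.castSucc, by rwa [Fin.snoc_castSucc]⟩
    · exact ⟨Fin.last m, by rwa [Fin.snoc_last]⟩

lemma strictMono_snoc {m : ℕ} {c : Fin m → ℕ} (hc : StrictMono c) {d : ℕ}
    (hd : ∀ i, c i < d) : StrictMono (Fin.snoc c d : Fin (m + 1) → ℕ) := by
  intro i j hij
  induction j using Fin.lastCases with
  | last =>
    have hi : i ≠ Fin.last m := ne_of_lt hij
    obtain ⟨i', rfl⟩ := Fin.exists_castSucc_eq.2 hi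
    rw [Fin.snoc_castSucc, Fin.snoc_last]
    exact hd i'
  | cast j' =>
    have hi : i ≠ Fin.last m := by
      intro h
      subst h
      have := hij.trans_le (Fin.le_last _)
      exact lt_irrefl _ this
    obtain ⟨i', rfl⟩ := Fin.exists_castSucc_eq.2 hi
    rw [Fin.snoc_castSucc, Fin.snoc_castSucc]
    exact hc (Fin.castSucc_lt_castSucc_iff.1 hij)

/-! ### the main induction -/

def GoodBelow (d j : ℕ) : Prop :=
  ∃ (m : ℕ) (c : Fin m → ℕ) (cube : Fin m → Set (Fin d → Bool)),
    StrictMono c ∧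
    (∀ i, c i < d) ∧
    (∀ i, IsSubcube d (c i) (cube i)) ∧
    Pairwise (fun i j => Disjoint (cube i) (cube j)) ∧
    {w | grayIdx d w ≤ j} = ⋃ i, cube i ∧
    (∀ i j, i < j → cube i ⊆ nbhd d (cube j))

lemma goodBelow : ∀ (d j : ℕ), j + 1 < 2 ^ d → GoodBelow d j := by
  intro d
  induction d with
  | zero => intro j hj; norm_num at hj
  | succ d ih =>
    intro j hj
    rcases lt_trichotomy (j + 1) (2 ^ d) with hA | hB | hC
    · -- initial segment inside the bottom facet
      obtain ⟨m, c, cube, h1, h2, h3, h4, h5, h6⟩ := ih j hA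
      refine ⟨m, c, fun i => Fin.cons false '' cube i, h1,
        fun i => (h2 i).trans (Nat.lt_succ_self d), fun i => ?_, ?_, ?_, ?_⟩
      · exact isSubcube_cons_image (le_of_lt (h2 i)) false (h3 i)
      · intro i k hik
        simp only [Function.onFun]
        rw [Set.disjoint_image_iff
          (Fin.cons_right_injective (α := fun _ : Fin (d+1) => Bool) false)]
        exact h4 hik
      · rw [segA (by omega), h5, Set.image_iUnion]
      · intro i k hik x hx
        rw [mem_cons_image] at hx
        obtain ⟨h0, ht⟩ := hx
        obtain ⟨a, ha, hadj⟩ := h6 i k hik ht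
        refine ⟨Fin.cons false a, ⟨a, ha, rfl⟩, ?_⟩
        show hammingDist x (Fin.cons false a : Fin (d+1) → Bool) = 1
        have hx0 : x = Fin.cons false (Fin.tail x) := by
          rw [← h0]
          exact (Fin.cons_self_tail x).symm
        conv_lhs => rw [hx0]
        rw [hammingDist_cons]
        have hadj' : hammingDist (Fin.tail x) a = 1 := hadj
        simpa using hadj'
    · -- the whole bottom facet
      refine ⟨1, fun _ => d, fun _ => {w | w 0 = false}, ?_, ?_, ?_, ?_, ?_, ?_⟩
      · intro i k hik
        exact absurd (Subsingleton.elim i k) (ne_of_lt hik)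
      · intro _; exact Nat.lt_succ_self d
      · intro _
        refine ⟨{0}, fun _ => false, ?_, ?_⟩
        · simp only [Finset.card_singleton]; omega
        · ext w; simp
      · intro i k hik
        exact absurd (Subsingleton.elim i k) hik
      · have hj' : j = 2 ^ d - 1 := by
          have : (0:ℕ) < 2 ^ d := Nat.pow_pos (n := d) (by norm_num)
          omega
        rw [hj', segB]
        ext x; simp
      · intro i k hik
        exact absurd (Subsingleton.elim i k) (ne_of_lt hik)
    · -- facet plus reflected initial segment in the top facet
      obtain ⟨e, rfl⟩ : ∃ e, d = e + 1 := by
        refine ⟨d - 1, ?_⟩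
        rcases Nat.eq_zero_or_pos d with h | h
        · subst h; norm_num at hC; omega
        · omega
      have hpow := two_pow_succ_eq (e + 1)
      have hj' : (j - 2 ^ (e + 1)) + 1 < 2 ^ (e + 1) := by omega
      obtain ⟨m, c, cube, h1, h2, h3, h4, h5, h6⟩ := ih (j - 2 ^ (e + 1)) hj'
      set τ : (Fin (e + 1) → Bool) → (Fin (e + 2) → Bool) :=
        fun u => Fin.cons true (flip0 u) with hτ
      have hτinj : Function.Injective τ :=
        fun x y h => flip0_injective (Fin.cons_right_injective (α := fun _ : Fin (e+2) => Bool) true h)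
      have hτdist : ∀ x y, hammingDist (τ x) (τ y) = hammingDist x y := by
        intro x y
        show hammingDist (Fin.cons true (flip0 x) : Fin (e+2) → Bool)
          (Fin.cons true (flip0 y) : Fin (e+2) → Bool) = _
        rw [hammingDist_cons, hammingDist_flip0]
        simp
      have himg : ∀ S : Set (Fin (e + 1) → Bool),
          τ '' S = (fun u : Fin (e+1) → Bool =>
            (Fin.cons true u : Fin (e+2) → Bool)) '' (flip0 '' S) := by
        intro S
        rw [Set.image_image]
      refine ⟨m + 1, Fin.snoc c (e + 1),
        Fin.snoc (fun i => τ '' cube i) {w | w 0 = false},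
        strictMono_snoc h1 h2, ?_, ?_, ?_, ?_, ?_⟩
      · intro i
        induction i using Fin.lastCases with
        | last => rw [Fin.snoc_last]; omega
        | cast i' => rw [Fin.snoc_castSucc]; exact (h2 i').trans (by omega)
      · intro i
        induction i using Fin.lastCases with
        | last =>
          rw [Fin.snoc_last, Fin.snoc_last]
          refine ⟨{0}, fun _ => false, ?_, ?_⟩
          · simp only [Finset.card_singleton]; omega
          · ext w; simp
        | cast i' =>
          rw [Fin.snoc_castSucc, Fin.snoc_castSucc, himg]
          exact isSubcube_cons_image (le_of_lt (h2 i')) true (isSubcube_flip0_image (h3 i'))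
      · intro i k hik
        induction i using Fin.lastCases with
        | last =>
          induction k using Fin.lastCases with
          | last => exact absurd rfl hik
          | cast k' =>
            rw [Fin.snoc_last, Fin.snoc_castSucc]
            rw [Set.disjoint_left]
            intro x hx hx'
            rw [hτ] at hx'
            rw [Set.mem_setOf_eq] at hx
            rw [mem_tau_image] at hx'
            rw [hx'.1] at hx
            exact Bool.noConfusion hx
        | cast i' =>
          induction k using Fin.lastCases with
          | last =>
            rw [Fin.snoc_last, Fin.snoc_castSucc]
            rw [Set.disjoint_left]
            intro x hx hx'
            rw [hτ] at hx
            rw [Set.mem_setOf_eq] at hx'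
            rw [mem_tau_image] at hx
            rw [hx.1] at hx'
            exact Bool.noConfusion hx'
          | cast k' =>
            rw [Fin.snoc_castSucc, Fin.snoc_castSucc]
            rw [Set.disjoint_image_iff hτinj]
            have : i' ≠ k' := by
              intro h; exact hik (by rw [h])
            exact h4 this
      · have hee : (2:ℕ) ^ (e + 2) = 2 ^ (e + 1 + 1) := rfl
        rw [iUnion_snoc, segC (by omega) (by omega), h5, Set.image_iUnion]
        rw [Set.union_comm]
      · intro i k hik
        induction k using Fin.lastCases with
        | last =>
          have hi : i ≠ Fin.last m := ne_of_lt hik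
          obtain ⟨i', rfl⟩ := Fin.exists_castSucc_eq.2 hi
          rw [Fin.snoc_castSucc, Fin.snoc_last]
          intro x hx
          rw [hτ, mem_tau_image] at hx
          refine ⟨Fin.cons false (Fin.tail x), ?_, ?_⟩
          · simp [Fin.cons_zero]
          · show hammingDist x _ = 1
            conv_lhs => rw [← Fin.cons_self_tail x, hx.1]
            rw [hammingDist_cons]
            simp
        | cast k' =>
          have hi : i ≠ Fin.last m := by
            intro h
            subst h
            exact lt_irrefl _ (hik.trans_le (Fin.le_last _))
          obtain ⟨i', rfl⟩ := Fin.exists_castSucc_eq.2 hi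
          rw [Fin.snoc_castSucc, Fin.snoc_castSucc]
          intro x hx
          obtain ⟨u, hu, rfl⟩ := hx
          exact mem_nbhd_image τ hτdist
            (h6 i' k' (Fin.castSucc_lt_castSucc_iff.1 hik) hu)


/-- For any `d > 0` and `0 ≤ j < 2^d`, the set `g_d⁻¹({0, …, j})` of Gray code
preimages of the first `j+1` integers is a composite set of `Q^d`. -/
theorem gray_initial_segment_composite (d : ℕ) (hd : 0 < d) (j : ℕ) (hj : j < 2 ^ d) :
    IsCompositeSet d {w | grayIdx d w ≤ j} := by
  rcases lt_or_ge (j + 1) (2 ^ d) with h | h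
  · obtain ⟨m, c, cube, h1, _, h3, h4, h5, h6⟩ := goodBelow d j h
    exact ⟨m, c, cube, h1, h3, h4, h5, h6⟩
  · have hset : {w : Fin d → Bool | grayIdx d w ≤ j} = Set.univ := by
      ext w
      simp only [Set.mem_setOf_eq, Set.mem_univ, iff_true]
      have := grayIdx_lt d w
      omega
    refine ⟨1, fun _ => d, fun _ => Set.univ, ?_, ?_, ?_, ?_, ?_⟩
    · intro i k hik
      exact absurd (Subsingleton.elim i k) (ne_of_lt hik)
    · intro _
      exact ⟨∅, fun _ => false, by simp, by ext w; simp⟩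
    · intro i k hik
      exact absurd (Subsingleton.elim i k) hik
    · rw [hset]; ext x; simp
    · intro i k hik
      exact absurd (Subsingleton.elim i k) (ne_of_lt hik)
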